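/- arXiv:0911.3887 — 3 statements merged into one kernel-verified Lean document; each statement's English description precedes it below -/
import Mathlib

section
/- Let A, B, C, D : ℕ → ℚ[X] be four Appell sequences and let n ≥ 3. For natural numbers i₁, i₂, i₃ let Δ(i₁,i₂,i₃) ∈ ℚ[X] be the determinant of the 3×3 matrix with rows ( [n]_{i₁}·(B i₁), [n]_{i₂}·(C i₂), [n]_{i₃}·(D i₃) ), ( [n−1]_{i₁}·(B (i₁+1)), [n−1]_{i₂}·(C (i₂+1)), [n−1]_{i₃}·(D (i₃+1)) ), ( [n−2]_{i₁}·(B (i₁+2)), [n−2]_{i₂}·(C (i₂+2)), [n−2]_{i₃}·(D (i₃+2)) ). Then the polynomial Ch_n(A,B,C,D) := ∑_{i=0}^{n} ((−1)^i / [3n−6]_i) · Cb(n,i) · (A (n−i)) · ∑_{i₁+i₂+i₃=i} (i! / (i₁!·i₂!·i₃!)) · Δ(i₁,i₂,i₃) ∈ ℚ[X] is constant, i.e. it equals Polynomial.C of its value at 0. -/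
namespace Ch17
open Polynomial Finset

lemma castDesc (m j : ℕ) :
    ((m.descFactorial (j+1) : ℕ) : ℚ) = ((m:ℚ) - j) * (m.descFactorial j : ℚ) := by
  rcases le_or_gt j m with h | h
  · rw [Nat.descFactorial_succ, Nat.cast_mul, Nat.cast_sub h]
  · have h1 : m.descFactorial (j+1) = 0 := Nat.descFactorial_eq_zero_iff_lt.2 (by omega)
    have h2 : m.descFactorial j = 0 := Nat.descFactorial_eq_zero_iff_lt.2 h
    simp [h1, h2]

lemma crossbase (m j : ℕ) :
    ((m:ℚ) - j) * (m.descFactorial j : ℚ) = (m : ℚ) * (((m-1).descFactorial j : ℕ) : ℚ) := by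
  rcases Nat.eq_zero_or_pos m with rfl | hm
  · rcases j with _ | j
    · simp
    · have : (0:ℕ).descFactorial (j+1) = 0 := Nat.descFactorial_eq_zero_iff_lt.2 (by omega)
      simp [this]
  · have hm1 : m - 1 + 1 = m := by omega
    have key : m.descFactorial (j+1) = m * ((m-1).descFactorial j) := by
      conv_lhs => rw [← hm1]
      rw [Nat.succ_descFactorial_succ, hm1]
    rw [← castDesc m j, key]
    push_cast
    ring

lemma dApp (X : ℕ → Polynomial ℚ) (hX0 : Polynomial.derivative (X 0) = 0)
    (hX : ∀ k : ℕ, Polynomial.derivative (X (k + 1)) = (k + 1) • X k) (m : ℕ) :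
    Polynomial.derivative (X m) = (m:ℚ) • X (m-1) := by
  rcases m with _ | k
  · simp [hX0]
  · rw [hX k, ← Nat.cast_smul_eq_nsmul ℚ]
    simp

noncomputable def ent (n : ℕ) (X : ℕ → Polynomial ℚ) (r a : ℕ) : Polynomial ℚ :=
  ((n - r).descFactorial a : ℚ) • X (a + r)

variable {n : ℕ} (hn : 3 ≤ n) {X : ℕ → Polynomial ℚ}
  (hX0 : derivative (X 0) = 0)
  (hX : ∀ k : ℕ, derivative (X (k + 1)) = (k + 1) • X k)

include hX in
lemma hX' (k : ℕ) : derivative (X (k+1)) = ((k:ℚ)+1) • X k := by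
  rw [hX k, ← Nat.cast_smul_eq_nsmul ℚ]; push_cast; ring_nf

include hn hX0 hX in
lemma E0 (a : ℕ) : derivative (ent n X 0 a)
    = ((a:ℚ) * ((n:ℚ) + 1 - a)) • ent n X 0 (a-1) := by
  rcases a with _ | a
  · simp [ent, hX0]
  · simp only [ent, Nat.sub_zero, Nat.add_zero, add_zero, Nat.add_sub_cancel]
    rw [derivative_smul, hX' hX a, smul_smul, smul_smul]
    congr 1
    rw [castDesc n a]
    push_cast
    ring

include hn hX0 hX in
lemma E1 (a : ℕ) : derivative (ent n X 1 a)
    = ent n X 0 a + ((a:ℚ) * ((n:ℚ) - 1 - a)) • ent n X 1 (a-1) := by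
  rcases a with _ | a
  · simp only [ent, Nat.descFactorial_zero, Nat.cast_one, one_smul, Nat.sub_zero, zero_add,
      Nat.zero_sub, Nat.cast_zero, zero_mul, zero_smul, add_zero]
    rw [hX' hX 0]
    norm_num
  · simp only [ent, Nat.sub_zero, add_zero, Nat.add_sub_cancel]
    rw [derivative_smul, hX' hX (a+1), smul_smul, smul_smul]
    rw [← add_smul]
    congr 1
    rw [castDesc (n-1) a, castDesc n a, Nat.cast_sub (by omega : 1 ≤ n)]
    push_cast
    linear_combination (-1 : ℚ) * crossbase n a

include hn hX0 hX in
lemma E2 (a : ℕ) : derivative (ent n X 2 a)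
    = (2:ℚ) • ent n X 1 a + ((a:ℚ) * ((n:ℚ) - 3 - a)) • ent n X 2 (a-1) := by
  rcases a with _ | a
  · simp only [ent, Nat.descFactorial_zero, Nat.cast_one, one_smul, zero_add, Nat.zero_sub,
      Nat.cast_zero, zero_mul, zero_smul, add_zero]
    rw [show (2:ℕ) = 1 + 1 from rfl, hX' hX 1]
    norm_num
  · simp only [ent, Nat.add_sub_cancel]
    rw [show a+1+2 = (a+2)+1 from rfl, derivative_smul, hX' hX (a+2), smul_smul, smul_smul, smul_smul]
    rw [← add_smul]
    congr 1
    rw [castDesc (n-1) a, castDesc (n-2) a, Nat.cast_sub (by omega : 1 ≤ n),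
      Nat.cast_sub (by omega : 2 ≤ n)]
    push_cast
    have cb := crossbase (n-1) a
    rw [Nat.cast_sub (by omega : 1 ≤ n), show n-1-1 = n-2 by omega] at cb
    push_cast at cb
    linear_combination (-2 : ℚ) * cb



variable (B C D : ℕ → Polynomial ℚ)


noncomputable def dd (n : ℕ) (B C D : ℕ → Polynomial ℚ) (a b c : ℕ) : Polynomial ℚ :=
    ent n B 0 a * ent n C 1 b * ent n D 2 c
  - ent n B 0 a * ent n D 1 c * ent n C 2 b
  - ent n C 0 b * ent n B 1 a * ent n D 2 c
  + ent n C 0 b * ent n D 1 c * ent n B 2 a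
  + ent n D 0 c * ent n B 1 a * ent n C 2 b
  - ent n D 0 c * ent n C 1 b * ent n B 2 a

noncomputable def g1 (n : ℕ) (B C D : ℕ → Polynomial ℚ) (a b c : ℕ) : Polynomial ℚ :=
    (2:ℚ) • (ent n C 0 b * ent n D 1 c * ent n B 2 a)
  + ent n D 0 c * ent n B 1 a * ent n C 2 b
  - ent n C 0 b * ent n B 1 a * ent n D 2 c
  - (2:ℚ) • (ent n D 0 c * ent n C 1 b * ent n B 2 a)

noncomputable def g2 (n : ℕ) (B C D : ℕ → Polynomial ℚ) (a b c : ℕ) : Polynomial ℚ :=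
    ent n B 0 a * ent n C 1 b * ent n D 2 c
  - (2:ℚ) • (ent n B 0 a * ent n D 1 c * ent n C 2 b)
  + (2:ℚ) • (ent n D 0 c * ent n B 1 a * ent n C 2 b)
  - ent n D 0 c * ent n C 1 b * ent n B 2 a

noncomputable def g3 (n : ℕ) (B C D : ℕ → Polynomial ℚ) (a b c : ℕ) : Polynomial ℚ :=
    (2:ℚ) • (ent n B 0 a * ent n C 1 b * ent n D 2 c)
  - ent n B 0 a * ent n D 1 c * ent n C 2 b
  - (2:ℚ) • (ent n C 0 b * ent n B 1 a * ent n D 2 c)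
  + ent n C 0 b * ent n D 1 c * ent n B 2 a

lemma L2 (a b c : ℕ) :
    g1 n B C D a b c + g2 n B C D a b c + g3 n B C D a b c = (3:ℚ) • dd n B C D a b c := by
  simp only [dd, g1, g2, g3, smul_eq_C_mul, map_ofNat]
  ring


variable {B C D}

include hn in
lemma L1 (hB0 : derivative (B 0) = 0)
    (hB : ∀ k : ℕ, derivative (B (k + 1)) = (k + 1) • B k)
    (hC0 : derivative (C 0) = 0)
    (hC : ∀ k : ℕ, derivative (C (k + 1)) = (k + 1) • C k)
    (hD0 : derivative (D 0) = 0)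
    (hD : ∀ k : ℕ, derivative (D (k + 1)) = (k + 1) • D k)
    (a b c : ℕ) :
    derivative (dd n B C D a b c) =
      (a:ℚ) • (((n:ℚ) + 1 - a) • dd n B C D (a-1) b c - (2:ℚ) • g1 n B C D (a-1) b c)
    + (b:ℚ) • (((n:ℚ) + 1 - b) • dd n B C D a (b-1) c - (2:ℚ) • g2 n B C D a (b-1) c)
    + (c:ℚ) • (((n:ℚ) + 1 - c) • dd n B C D a b (c-1) - (2:ℚ) • g3 n B C D a b (c-1)) := by
  simp only [dd, g1, g2, g3, derivative_add, derivative_sub, derivative_mul,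
    E0 hn hB0 hB, E1 hn hB0 hB, E2 hn hB0 hB,
    E0 hn hC0 hC, E1 hn hC0 hC, E2 hn hC0 hC,
    E0 hn hD0 hD, E1 hn hD0 hD, E2 hn hD0 hD,
    smul_eq_C_mul, map_ofNat, map_mul, map_add, map_sub, map_one, map_natCast]
  ring

noncomputable def ww (i a b c : ℕ) : ℚ :=
  (i.factorial : ℚ) / ((a.factorial : ℚ) * (b.factorial : ℚ) * (c.factorial : ℚ))

lemma ww1 (i a b c : ℕ) : ww (i+1) (a+1) b c * ((a:ℚ)+1) = ((i:ℚ)+1) * ww i a b c := by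
  have ha : ((a.factorial : ℕ) : ℚ) ≠ 0 := Nat.cast_ne_zero.mpr a.factorial_ne_zero
  have hb : ((b.factorial : ℕ) : ℚ) ≠ 0 := Nat.cast_ne_zero.mpr b.factorial_ne_zero
  have hc : ((c.factorial : ℕ) : ℚ) ≠ 0 := Nat.cast_ne_zero.mpr c.factorial_ne_zero
  unfold ww
  rw [Nat.factorial_succ i, Nat.factorial_succ a]
  push_cast
  field_simp

lemma ww2 (i a b c : ℕ) : ww (i+1) a (b+1) c * ((b:ℚ)+1) = ((i:ℚ)+1) * ww i a b c := by
  have ha : ((a.factorial : ℕ) : ℚ) ≠ 0 := Nat.cast_ne_zero.mpr a.factorial_ne_zero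
  have hb : ((b.factorial : ℕ) : ℚ) ≠ 0 := Nat.cast_ne_zero.mpr b.factorial_ne_zero
  have hc : ((c.factorial : ℕ) : ℚ) ≠ 0 := Nat.cast_ne_zero.mpr c.factorial_ne_zero
  unfold ww
  rw [Nat.factorial_succ i, Nat.factorial_succ b]
  push_cast
  field_simp

lemma ww3 (i a b c : ℕ) : ww (i+1) a b (c+1) * ((c:ℚ)+1) = ((i:ℚ)+1) * ww i a b c := by
  have ha : ((a.factorial : ℕ) : ℚ) ≠ 0 := Nat.cast_ne_zero.mpr a.factorial_ne_zero
  have hb : ((b.factorial : ℕ) : ℚ) ≠ 0 := Nat.cast_ne_zero.mpr b.factorial_ne_zero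
  have hc : ((c.factorial : ℕ) : ℚ) ≠ 0 := Nat.cast_ne_zero.mpr c.factorial_ne_zero
  unfold ww
  rw [Nat.factorial_succ i, Nat.factorial_succ c]
  push_cast
  field_simp

section shifts
variable {M : Type*} [AddCommMonoid M]

lemma shift1 (i : ℕ) (F : ℕ → ℕ → M) (hF : ∀ b, F 0 b = 0) :
    (∑ a ∈ Finset.range (i+1+1), ∑ b ∈ Finset.range (i+1-a+1), F a b)
      = ∑ a ∈ Finset.range (i+1), ∑ b ∈ Finset.range (i-a+1), F (a+1) b := by
  rw [Finset.sum_range_succ']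
  simp [hF, Nat.succ_sub_succ]

lemma shift2 (i : ℕ) (F : ℕ → ℕ → M) (hF : ∀ a, F a 0 = 0) :
    (∑ a ∈ Finset.range (i+1+1), ∑ b ∈ Finset.range (i+1-a+1), F a b)
      = ∑ a ∈ Finset.range (i+1), ∑ b ∈ Finset.range (i-a+1), F a (b+1) := by
  have h1 : ∀ a, (∑ b ∈ Finset.range (i+1-a+1), F a b)
      = ∑ b ∈ Finset.range (i+1-a), F a (b+1) := by
    intro a
    rw [Finset.sum_range_succ']
    simp [hF]
  simp only [h1]
  rw [Finset.sum_range_succ]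
  simp only [Nat.sub_self, Finset.range_zero, Finset.sum_empty, add_zero]
  apply Finset.sum_congr rfl
  intro a ha
  have : i+1-a = i-a+1 := by have := Finset.mem_range.1 ha; omega
  rw [this]

lemma shift3 (i : ℕ) (F : ℕ → ℕ → ℕ → M) (hF : ∀ a b, F a b 0 = 0) :
    (∑ a ∈ Finset.range (i+1+1), ∑ b ∈ Finset.range (i+1-a+1), F a b (i+1-a-b))
      = ∑ a ∈ Finset.range (i+1), ∑ b ∈ Finset.range (i-a+1), F a b (i-a-b+1) := by
  rw [Finset.sum_range_succ]
  have last0 : (∑ b ∈ Finset.range (i+1-(i+1)+1), F (i+1) b (i+1-(i+1)-b)) = 0 := by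
    simp [hF]
  rw [last0, add_zero]
  apply Finset.sum_congr rfl
  intro a ha
  have ha' : a ≤ i := by have := Finset.mem_range.1 ha; omega
  have hb1 : i+1-a+1 = (i-a+1)+1 := by omega
  rw [hb1, Finset.sum_range_succ]
  have hz : F a (i-a+1) (i+1-a-(i-a+1)) = 0 := by
    have : i+1-a-(i-a+1) = 0 := by omega
    rw [this]; exact hF _ _
  rw [hz, add_zero]
  apply Finset.sum_congr rfl
  intro b hb
  have : i+1-a-b = (i-a-b)+1 := by have := Finset.mem_range.1 hb; omega
  rw [this]

end shifts

noncomputable def SS (n : ℕ) (B C D : ℕ → Polynomial ℚ) (i : ℕ) : Polynomial ℚ :=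
  ∑ a ∈ Finset.range (i+1), ∑ b ∈ Finset.range (i-a+1),
    ww i a b (i-a-b) • dd n B C D a b (i-a-b)

lemma SumShift1 (i : ℕ) (G : ℕ → ℕ → ℕ → Polynomial ℚ) :
    (∑ a ∈ Finset.range (i+1+1), ∑ b ∈ Finset.range (i+1-a+1),
        ww (i+1) a b (i+1-a-b) • ((a:ℚ) • G a b (i+1-a-b)))
      = ((i:ℚ)+1) • ∑ a ∈ Finset.range (i+1), ∑ b ∈ Finset.range (i-a+1),
          ww i a b (i-a-b) • G (a+1) b (i-a-b) := by
  refine (shift1 i (fun a b => ww (i+1) a b (i+1-a-b) • ((a:ℚ) • G a b (i+1-a-b)))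
    (by intro b; simp)).trans ?_
  rw [Finset.smul_sum]
  apply Finset.sum_congr rfl
  intro a _
  rw [Finset.smul_sum]
  apply Finset.sum_congr rfl
  intro b _
  have h1 : i+1-(a+1) = i-a := by omega
  simp only [h1]
  rw [smul_smul, smul_smul]
  congr 1
  have := ww1 i a b (i-a-b)
  push_cast at this ⊢
  linear_combination this

lemma SumShift2 (i : ℕ) (G : ℕ → ℕ → ℕ → Polynomial ℚ) :
    (∑ a ∈ Finset.range (i+1+1), ∑ b ∈ Finset.range (i+1-a+1),
        ww (i+1) a b (i+1-a-b) • ((b:ℚ) • G a b (i+1-a-b)))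
      = ((i:ℚ)+1) • ∑ a ∈ Finset.range (i+1), ∑ b ∈ Finset.range (i-a+1),
          ww i a b (i-a-b) • G a (b+1) (i-a-b) := by
  refine (shift2 i (fun a b => ww (i+1) a b (i+1-a-b) • ((b:ℚ) • G a b (i+1-a-b)))
    (by intro a; simp)).trans ?_
  rw [Finset.smul_sum]
  apply Finset.sum_congr rfl
  intro a _
  rw [Finset.smul_sum]
  apply Finset.sum_congr rfl
  intro b _
  have h1 : i+1-a-(b+1) = i-a-b := by omega
  simp only [h1]
  rw [smul_smul, smul_smul]
  congr 1
  have := ww2 i a b (i-a-b)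
  push_cast at this ⊢
  linear_combination this

lemma SumShift3 (i : ℕ) (G : ℕ → ℕ → ℕ → Polynomial ℚ) :
    (∑ a ∈ Finset.range (i+1+1), ∑ b ∈ Finset.range (i+1-a+1),
        ww (i+1) a b (i+1-a-b) • (((i+1-a-b : ℕ):ℚ) • G a b (i+1-a-b)))
      = ((i:ℚ)+1) • ∑ a ∈ Finset.range (i+1), ∑ b ∈ Finset.range (i-a+1),
          ww i a b (i-a-b) • G a b (i-a-b+1) := by
  refine (shift3 i (fun a b c => ww (i+1) a b c • ((c:ℚ) • G a b c))
    (by intro a b; simp)).trans ?_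
  rw [Finset.smul_sum]
  apply Finset.sum_congr rfl
  intro a _
  rw [Finset.smul_sum]
  apply Finset.sum_congr rfl
  intro b _
  rw [smul_smul, smul_smul]
  congr 1
  have := ww3 i a b (i-a-b)
  push_cast at this ⊢
  linear_combination this

include hn in
lemma Sderiv (hB0 : derivative (B 0) = 0)
    (hB : ∀ k : ℕ, derivative (B (k + 1)) = (k + 1) • B k)
    (hC0 : derivative (C 0) = 0)
    (hC : ∀ k : ℕ, derivative (C (k + 1)) = (k + 1) • C k)
    (hD0 : derivative (D 0) = 0)
    (hD : ∀ k : ℕ, derivative (D (k + 1)) = (k + 1) • D k)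
    (i : ℕ) :
    derivative (SS n B C D (i+1))
      = (((i:ℚ)+1) * (3*(n:ℚ) - 6 - (i:ℚ))) • SS n B C D i := by
  unfold SS
  rw [derivative_sum]
  simp only [derivative_sum, derivative_smul, L1 hn hB0 hB hC0 hC hD0 hD]
  simp only [smul_add, Finset.sum_add_distrib]
  rw [SumShift1 i (fun x y z => ((n:ℚ)+1-(x:ℚ)) • dd n B C D (x-1) y z
        - (2:ℚ) • g1 n B C D (x-1) y z),
      SumShift2 i (fun x y z => ((n:ℚ)+1-(y:ℚ)) • dd n B C D x (y-1) z
        - (2:ℚ) • g2 n B C D x (y-1) z),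
      SumShift3 i (fun x y z => ((n:ℚ)+1-(z:ℚ)) • dd n B C D x y (z-1)
        - (2:ℚ) • g3 n B C D x y (z-1))]
  rw [← smul_add, ← smul_add, mul_smul]
  congr 1
  rw [Finset.smul_sum]
  simp only [← Finset.sum_add_distrib]
  apply Finset.sum_congr rfl
  intro a ha
  rw [Finset.smul_sum]
  apply Finset.sum_congr rfl
  intro b hb
  have ha' : a ≤ i := by have := Finset.mem_range.1 ha; omega
  have hb' : b ≤ i - a := by have := Finset.mem_range.1 hb; omega
  have hc : ((i-a-b : ℕ) : ℚ) = (i:ℚ) - a - b := by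
    rw [Nat.sub_sub, Nat.cast_sub (by omega)]
    push_cast
    ring
  simp only [Nat.add_sub_cancel]
  rw [smul_comm ((3:ℚ)*(n:ℚ) - 6 - (i:ℚ))]
  rw [← smul_add, ← smul_add]
  congr 1
  have h3 := L2 (n := n) B C D a b (i-a-b)
  push_cast [hc]
  linear_combination (norm := module) (-2 : ℚ) • h3

include hn in
lemma dSS0 (hB0 : derivative (B 0) = 0)
    (hB : ∀ k : ℕ, derivative (B (k + 1)) = (k + 1) • B k)
    (hC0 : derivative (C 0) = 0)
    (hC : ∀ k : ℕ, derivative (C (k + 1)) = (k + 1) • C k)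
    (hD0 : derivative (D 0) = 0)
    (hD : ∀ k : ℕ, derivative (D (k + 1)) = (k + 1) • D k) :
    derivative (SS n B C D 0) = 0 := by
  have h := L1 hn hB0 hB hC0 hC hD0 hD 0 0 0
  simp only [Nat.cast_zero, zero_smul, add_zero, zero_add] at h
  simp [SS, h]

lemma tele {n : ℕ} (hn : 3 ≤ n) (k : ℕ) (hk : k < n) :
    (((-1:ℚ)^k / ((3*n-6).descFactorial k : ℚ)) * (n.choose k : ℚ)) * ((n-k : ℕ):ℚ)
    + (((-1:ℚ)^(k+1) / ((3*n-6).descFactorial (k+1) : ℚ)) * (n.choose (k+1) : ℚ))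
        * (((k:ℚ)+1) * (3*(n:ℚ) - 6 - (k:ℚ))) = 0 := by
  have h1 : (((3*n-6).descFactorial (k+1) : ℕ) : ℚ)
      = (3*(n:ℚ)-6-(k:ℚ)) * (((3*n-6).descFactorial k : ℕ) : ℚ) := by
    rw [castDesc]
    congr 2
    rw [Nat.cast_sub (show 6 ≤ 3*n by omega)]
    push_cast
    ring
  have h2 : ((n.choose (k+1) : ℕ):ℚ) * ((k:ℚ)+1) = ((n.choose k : ℕ) : ℚ) * ((n-k : ℕ):ℚ) := by
    exact_mod_cast congrArg (Nat.cast (R := ℚ)) (Nat.choose_succ_right_eq n k)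
  have h3 : (((3*n-6).descFactorial k : ℕ) : ℚ) ≠ 0 := by
    rw [Nat.cast_ne_zero]
    intro h
    rw [Nat.descFactorial_eq_zero_iff_lt] at h
    omega
  have h4 : (3*(n:ℚ) - 6 - (k:ℚ)) ≠ 0 := by
    have hk1 : ((k:ℚ)+1) ≤ (n:ℚ) := by exact_mod_cast hk
    have hn3 : (3:ℚ) ≤ (n:ℚ) := by exact_mod_cast hn
    intro h
    nlinarith
  rw [pow_succ, h1]
  have h5 : ((-1:ℚ)^k * -1 / ((3*(n:ℚ)-6-(k:ℚ)) * (((3*n-6).descFactorial k : ℕ) : ℚ))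
        * ((n.choose (k+1) : ℕ) : ℚ)) * (((k:ℚ)+1) * (3*(n:ℚ)-6-(k:ℚ)))
      = -(((-1:ℚ)^k / (((3*n-6).descFactorial k : ℕ) : ℚ))
          * (((n.choose (k+1) : ℕ) : ℚ) * ((k:ℚ)+1))) := by
    field_simp
  rw [h5, h2]
  ring

end Ch17

open Ch17 Polynomial in
/-- For four Appell sequences `A`, `B`, `C`, `D` and `n ≥ 3`, the joint
semi-invariant expression
`Ch_n(A,B,C,D) = ∑_{i=0}^{n} ((−1)^i/[3n−6]_i) C(n,i) A_{n−i}
  ∑_{i₁+i₂+i₃=i} (i!/(i₁! i₂! i₃!)) Δ(i₁,i₂,i₃)`,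
where `Δ(i₁,i₂,i₃)` is the indicated `3×3` determinant, is constant, equal to
`Polynomial.C` of its value at `0`. -/
theorem Ch_four_constant
    (A B C D : ℕ → Polynomial ℚ)
    (hA0 : Polynomial.derivative (A 0) = 0)
    (hA : ∀ k : ℕ, Polynomial.derivative (A (k + 1)) = (k + 1) • A k)
    (hB0 : Polynomial.derivative (B 0) = 0)
    (hB : ∀ k : ℕ, Polynomial.derivative (B (k + 1)) = (k + 1) • B k)
    (hC0 : Polynomial.derivative (C 0) = 0)
    (hC : ∀ k : ℕ, Polynomial.derivative (C (k + 1)) = (k + 1) • C k)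
    (hD0 : Polynomial.derivative (D 0) = 0)
    (hD : ∀ k : ℕ, Polynomial.derivative (D (k + 1)) = (k + 1) • D k)
    (n : ℕ) (hn : 3 ≤ n)
    (Δ : ℕ → ℕ → ℕ → Polynomial ℚ)
    (hΔ : ∀ i₁ i₂ i₃, Δ i₁ i₂ i₃ = Matrix.det
      !![(Nat.descFactorial n i₁ : ℚ) • B i₁,
          (Nat.descFactorial n i₂ : ℚ) • C i₂,
          (Nat.descFactorial n i₃ : ℚ) • D i₃;
        (Nat.descFactorial (n - 1) i₁ : ℚ) • B (i₁ + 1),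
          (Nat.descFactorial (n - 1) i₂ : ℚ) • C (i₂ + 1),
          (Nat.descFactorial (n - 1) i₃ : ℚ) • D (i₃ + 1);
        (Nat.descFactorial (n - 2) i₁ : ℚ) • B (i₁ + 2),
          (Nat.descFactorial (n - 2) i₂ : ℚ) • C (i₂ + 2),
          (Nat.descFactorial (n - 2) i₃ : ℚ) • D (i₃ + 2)])
    (T : Polynomial ℚ)
    (hT : T = ∑ i ∈ Finset.range (n + 1),
        (((-1 : ℚ) ^ i / (Nat.descFactorial (3 * n - 6) i : ℚ)) * (n.choose i)) •
          (A (n - i) *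
            ∑ p ∈ Finset.HasAntidiagonal.antidiagonal i, ∑ q ∈ Finset.HasAntidiagonal.antidiagonal p.2,
              ((i.factorial : ℚ) /
                  ((p.1.factorial : ℚ) * (q.1.factorial : ℚ) * (q.2.factorial : ℚ))) •
                Δ p.1 q.1 q.2)) :
    T = Polynomial.C (T.eval 0) := by
  have hmatch : ∀ i : ℕ,
      (∑ p ∈ Finset.HasAntidiagonal.antidiagonal i, ∑ q ∈ Finset.HasAntidiagonal.antidiagonal p.2,
        ((i.factorial : ℚ) /
            ((p.1.factorial : ℚ) * (q.1.factorial : ℚ) * (q.2.factorial : ℚ))) •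
          Δ p.1 q.1 q.2) = SS n B C D i := by
    intro i
    rw [SS, Finset.Nat.sum_antidiagonal_eq_sum_range_succ_mk]
    apply Finset.sum_congr rfl
    intro a _
    rw [Finset.Nat.sum_antidiagonal_eq_sum_range_succ_mk]
    apply Finset.sum_congr rfl
    intro b _
    rw [hΔ]
    have hdet : Matrix.det
      !![(Nat.descFactorial n a : ℚ) • B a,
          (Nat.descFactorial n b : ℚ) • C b,
          (Nat.descFactorial n (i-a-b) : ℚ) • D (i-a-b);
        (Nat.descFactorial (n - 1) a : ℚ) • B (a + 1),
          (Nat.descFactorial (n - 1) b : ℚ) • C (b + 1),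
          (Nat.descFactorial (n - 1) (i-a-b) : ℚ) • D ((i-a-b) + 1);
        (Nat.descFactorial (n - 2) a : ℚ) • B (a + 2),
          (Nat.descFactorial (n - 2) b : ℚ) • C (b + 2),
          (Nat.descFactorial (n - 2) (i-a-b) : ℚ) • D ((i-a-b) + 2)]
        = dd n B C D a b (i-a-b) := by
      rw [Matrix.det_fin_three]
      norm_num [Matrix.cons_val_zero, Matrix.cons_val_one, Matrix.head_cons, Matrix.cons_val_two, Matrix.tail_cons]
      simp only [dd, ent, Nat.sub_zero, add_zero, smul_eq_C_mul]
      ring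
    rw [hdet, ww]
  have key : derivative T = 0 := by
    rw [hT]
    simp only [hmatch]
    rw [derivative_sum]
    simp only [derivative_smul, derivative_mul, dApp A hA0 hA]
    simp only [smul_add, Finset.sum_add_distrib]
    have hβ : (∑ i ∈ Finset.range (n+1),
        (((-1 : ℚ) ^ i / (Nat.descFactorial (3 * n - 6) i : ℚ)) * (n.choose i)) •
          (A (n - i) * derivative (SS n B C D i)))
        = ∑ k ∈ Finset.range n,
        (((-1 : ℚ) ^ (k+1) / (Nat.descFactorial (3 * n - 6) (k+1) : ℚ)) * (n.choose (k+1))) •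
          (A (n - (k+1)) * ((((k:ℚ)+1) * (3*(n:ℚ) - 6 - (k:ℚ))) • SS n B C D k)) := by
      rw [Finset.sum_range_succ']
      rw [dSS0 hn hB0 hB hC0 hC hD0 hD]
      simp only [mul_zero, smul_zero, add_zero]
      apply Finset.sum_congr rfl
      intro k _
      rw [Sderiv hn hB0 hB hC0 hC hD0 hD k]
    rw [hβ]
    have hα : (∑ i ∈ Finset.range (n+1),
        (((-1 : ℚ) ^ i / (Nat.descFactorial (3 * n - 6) i : ℚ)) * (n.choose i)) •
          ((((n - i : ℕ):ℚ) • A (n - i - 1)) * SS n B C D i))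
        = ∑ k ∈ Finset.range n,
        (((-1 : ℚ) ^ k / (Nat.descFactorial (3 * n - 6) k : ℚ)) * (n.choose k)) •
          ((((n - k : ℕ):ℚ) • A (n - k - 1)) * SS n B C D k) := by
      rw [Finset.sum_range_succ]
      simp [Nat.sub_self]
    rw [hα, ← Finset.sum_add_distrib]
    apply Finset.sum_eq_zero
    intro k hk
    have hkn : k < n := Finset.mem_range.1 hk
    have hidx : n - (k+1) = n - k - 1 := (Nat.sub_sub n k 1).symm
    rw [hidx, smul_mul_assoc, mul_smul_comm, smul_smul, smul_smul, ← add_smul]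
    rw [tele hn k hkn]
    exact zero_smul _ _
  have hdeg : T.natDegree = 0 := natDegree_eq_zero_of_derivative_eq_zero key
  have hC' := Polynomial.eq_C_of_natDegree_eq_zero hdeg
  rwa [Polynomial.coeff_zero_eq_eval_zero] at hC'
end

section
/- For every natural number n, the Bernoulli polynomials satisfy the identity ∑_{i=0}^{n} (−1)^i · C(n,i) · (Polynomial.bernoulli i) · (Polynomial.bernoulli (n−i)) = Polynomial.C ((1 − n) · bernoulli n) in ℚ[X]; that is, the alternating binomial convolution of Bernoulli polynomials is the constant (1−n)·B_n. -/
noncomputable section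

open PowerSeries Finset Nat

namespace BernAux

theorem derivativeFun_exp' {A : Type*} [CommRing A] [Algebra ℚ A] :
    (exp A).derivativeFun = exp A := by
  ext n
  erw [coeff_derivativeFun, coeff_exp, coeff_exp]
  rw [show ((n : A) + 1) = algebraMap ℚ A ((n : ℚ) + 1) by push_cast; ring, ← map_mul]
  congr 1
  have h1 : ((n + 1)! : ℚ) ≠ 0 := by exact_mod_cast Nat.factorial_ne_zero _
  have h2 : ((n)! : ℚ) ≠ 0 := by exact_mod_cast Nat.factorial_ne_zero _
  rw [Nat.factorial_succ] at h1 ⊢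
  field_simp
  push_cast
  ring

theorem derivativeFun_X' {A : Type*} [CommRing A] :
    (X : PowerSeries A).derivativeFun = 1 := by
  ext n
  erw [coeff_derivativeFun, coeff_X, coeff_one]
  simp only [add_eq_right]
  split_ifs with h
  · simp [h]
  · simp

private def PP : PowerSeries (Polynomial ℚ) :=
  PowerSeries.mk fun n =>
    Polynomial.aeval (Polynomial.X : Polynomial ℚ) ((1 / n ! : ℚ) • Polynomial.bernoulli n)

private def QQ : PowerSeries (Polynomial ℚ) := bernoulliPowerSeries (Polynomial ℚ)

private def DD : PowerSeries (Polynomial ℚ) := QQ - X * QQ.derivativeFun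

private lemma hP : PP * (exp (Polynomial ℚ) - 1)
    = X * rescale Polynomial.X (exp (Polynomial ℚ)) :=
  Polynomial.bernoulli_generating_function (Polynomial.X : Polynomial ℚ)

private lemma coeff_PP (n : ℕ) :
    coeff (R := Polynomial ℚ) n PP = (1 / n ! : ℚ) • Polynomial.bernoulli n := by
  rw [PP, coeff_mk, map_smul, Polynomial.aeval_X_left_apply]

private lemma key : rescale (-1 : Polynomial ℚ) PP * PP = DD := by
  set E : PowerSeries (Polynomial ℚ) := exp (Polynomial ℚ) with hE
  have hQ : QQ * (E - 1) = X := bernoulliPowerSeries_mul_exp_sub_one (Polynomial ℚ)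
  have hdE : (E - 1).derivativeFun = E := by
    have h1 : E.derivativeFun = E := by rw [hE]; exact derivativeFun_exp'
    have h := derivativeFun_add (E - 1) 1
    rw [derivativeFun_one, add_zero, sub_add_cancel, h1] at h
    exact h.symm
  have hdQ : (E - 1) * QQ.derivativeFun = 1 - QQ * E := by
    have h : (QQ * (E - 1)).derivativeFun = (X : PowerSeries (Polynomial ℚ)).derivativeFun := by
      rw [hQ]
    rw [derivativeFun_mul, hdE, derivativeFun_X', smul_eq_mul, smul_eq_mul] at h
    linear_combination h
  have hP' : rescale (-1 : Polynomial ℚ) PP * (rescale (-1 : Polynomial ℚ) E - 1) =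
      (-X) * rescale (-(Polynomial.X : Polynomial ℚ)) E := by
    have h : rescale (-1 : Polynomial ℚ) (PP * (E - 1))
        = rescale (-1 : Polynomial ℚ) (X * rescale Polynomial.X E) := by rw [hE, hP]
    rw [map_mul, map_sub, map_one, map_mul, rescale_neg_one_X, rescale_rescale,
      show (Polynomial.X * -1 : Polynomial ℚ) = -Polynomial.X by ring] at h
    exact h
  have h4 : E * rescale (-1 : Polynomial ℚ) E = 1 := by
    have h := exp_mul_exp_eq_exp_add (1 : Polynomial ℚ) (-1)
    rw [rescale_one, RingHom.id_apply, show (1 : Polynomial ℚ) + -1 = 0 by ring] at h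
    rw [hE, h]
    simp [rescale_zero, constantCoeff_exp]
  have h6 : E * rescale (-(Polynomial.X : Polynomial ℚ)) E
      = rescale (1 - Polynomial.X : Polynomial ℚ) E := by
    have h := exp_mul_exp_eq_exp_add (1 : Polynomial ℚ) (-(Polynomial.X : Polynomial ℚ))
    rw [rescale_one, RingHom.id_apply,
      show (1 : Polynomial ℚ) + -Polynomial.X = 1 - Polynomial.X by ring] at h
    rw [hE, h]
  have h5 : rescale (1 - Polynomial.X : Polynomial ℚ) E
      * rescale (Polynomial.X : Polynomial ℚ) E = E := by
    have h := exp_mul_exp_eq_exp_add (1 - Polynomial.X : Polynomial ℚ) Polynomial.X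
    rw [show (1 - Polynomial.X : Polynomial ℚ) + Polynomial.X = 1 by ring, rescale_one,
      RingHom.id_apply] at h
    rw [hE, h]
  have hPE : rescale (-1 : Polynomial ℚ) PP * (E - 1)
      = X * rescale (1 - Polynomial.X : Polynomial ℚ) E := by
    linear_combination (-E) * hP' + rescale (-1 : Polynomial ℚ) PP * h4 + X * h6
  have hne : (E - 1) ^ 2 ≠ 0 := by
    apply pow_ne_zero
    intro h
    have h1 := congrArg (coeff (R := Polynomial ℚ) 1) h
    simp [hE, coeff_exp] at h1
  apply mul_right_cancel₀ hne
  have lhs : rescale (-1 : Polynomial ℚ) PP * PP * (E - 1) ^ 2 = X ^ 2 * E := by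
    linear_combination (PP * (E - 1)) * hPE
      + (X * rescale (1 - Polynomial.X : Polynomial ℚ) E) * hP + X ^ 2 * h5
  have rhs : DD * (E - 1) ^ 2 = X ^ 2 * E := by
    unfold DD
    linear_combination (E - 1 + X * E) * hQ - (X * (E - 1)) * hdQ
  rw [lhs, rhs]

end BernAux

/-- The alternating binomial convolution of Bernoulli polynomials is
constant: `∑_{i=0}^{n} (−1)^i C(n,i) B_i(x) B_{n−i}(x) = (1 − n) B_n`. -/
theorem bernoulli_alternating_convolution
    (n : ℕ) :
    (∑ i ∈ Finset.range (n + 1), ((-1 : ℚ) ^ i * (n.choose i)) •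
        (Polynomial.bernoulli i * Polynomial.bernoulli (n - i))) =
      Polynomial.C ((1 - (n : ℚ)) * bernoulli n) := by
  have h := congrArg (fun f => ((n ! : ℚ)) • (PowerSeries.coeff (R := Polynomial ℚ) n f)) BernAux.key
  have hfac : ((n)! : ℚ) ≠ 0 := by exact_mod_cast Nat.factorial_ne_zero _
  have hD : ((n ! : ℚ)) • PowerSeries.coeff (R := Polynomial ℚ) n BernAux.DD
      = Polynomial.C ((1 - (n : ℚ)) * bernoulli n) := by
    unfold BernAux.DD BernAux.QQ
    have hX : PowerSeries.coeff (R := Polynomial ℚ) n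
        (PowerSeries.X * (bernoulliPowerSeries (Polynomial ℚ)).derivativeFun) =
        Polynomial.C (bernoulli n / n ! * n) := by
      cases n with
      | zero => simp
      | succ m =>
        erw [PowerSeries.coeff_succ_X_mul, PowerSeries.coeff_derivativeFun, bernoulliPowerSeries,
          PowerSeries.coeff_mk, Polynomial.algebraMap_eq]
        rw [show ((m : Polynomial ℚ) + 1) = Polynomial.C ((m : ℚ) + 1) by simp,
          ← map_mul]
        push_cast
        ring_nf
    rw [map_sub, hX, bernoulliPowerSeries, PowerSeries.coeff_mk, Polynomial.algebraMap_eq,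
      ← map_sub, Polynomial.smul_C, smul_eq_mul]
    congr 1
    field_simp
  rw [hD] at h
  rw [← h]
  rw [PowerSeries.coeff_mul, Finset.Nat.sum_antidiagonal_eq_sum_range_succ_mk, Finset.smul_sum]
  apply Finset.sum_congr rfl
  intro i hi
  have hin : i ≤ n := Nat.lt_succ_iff.mp (Finset.mem_range.mp hi)
  dsimp only
  rw [PowerSeries.coeff_rescale, BernAux.coeff_PP, BernAux.coeff_PP]
  rw [Nat.cast_choose ℚ hin]
  have h1 : ((i)! : ℚ) ≠ 0 := by exact_mod_cast Nat.factorial_ne_zero _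
  have h2 : (((n - i))! : ℚ) ≠ 0 := by exact_mod_cast Nat.factorial_ne_zero _
  rw [Polynomial.smul_eq_C_mul, Polynomial.smul_eq_C_mul, Polynomial.smul_eq_C_mul,
    Polynomial.smul_eq_C_mul]
  rw [show ((-1 : Polynomial ℚ) ^ i) = Polynomial.C ((-1 : ℚ) ^ i) by simp]
  rw [show ((-1:ℚ)^i * ((n ! : ℚ) / ((i ! : ℚ) * ((n-i)! : ℚ))))
      = ((n ! : ℚ) * ((-1:ℚ)^i * ((1/(i ! : ℚ)) * (1/((n-i)! : ℚ)))) : ℚ) by field_simp,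
    map_mul, map_mul, map_mul]
  ring
end
end

section
/- Let A : ℕ → ℚ[X] be an Appell sequence. Then for every n, ∑_{i=0}^{n} (−1)^i · C(n,i) · (A i) · X^{n−i} = Polynomial.C ((−1)^n · (A n).eval 0) in ℚ[X]; equivalently, A_n(x) can be recovered as A_n(x) = ∑_{i=0}^{n−1} (−1)^{n+i+1} · C(n,i) · A_i(x) · x^{n−i} + A_n(0). In particular this holds for the Bernoulli and Hermite polynomials. -/
open Polynomial Finset in
/-- For an Appell sequence `A`,
`∑_{i=0}^{n} (−1)^i C(n,i) A_i(x) x^{n−i} = (−1)^n A_n(0)`; equivalently,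
`A_n(x) = ∑_{i=0}^{n−1} (−1)^{n+i+1} C(n,i) A_i(x) x^{n−i} + A_n(0)`. -/
theorem appell_recovery
    (A : ℕ → Polynomial ℚ)
    (hA0 : Polynomial.derivative (A 0) = 0)
    (hA : ∀ k : ℕ, Polynomial.derivative (A (k + 1)) = (k + 1) • A k)
    (n : ℕ) :
    (∑ i ∈ Finset.range (n + 1), ((-1 : ℚ) ^ i * (n.choose i)) •
        (A i * Polynomial.X ^ (n - i))) =
      Polynomial.C ((-1 : ℚ) ^ n * (A n).eval 0) ∧
    A n = (∑ i ∈ Finset.range n, ((-1 : ℚ) ^ (n + i + 1) * (n.choose i)) •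
        (A i * Polynomial.X ^ (n - i))) + Polynomial.C ((A n).eval 0) := by
  set S := ∑ i ∈ Finset.range (n + 1), ((-1 : ℚ) ^ i * (n.choose i)) •
        (A i * Polynomial.X ^ (n - i)) with hS
  have hder : Polynomial.derivative S = 0 := by
    rw [hS, map_sum]
    have hterm : ∀ i ∈ Finset.range (n+1),
        Polynomial.derivative (((-1 : ℚ) ^ i * (n.choose i)) • (A i * Polynomial.X ^ (n - i)))
        = ((-1 : ℚ) ^ i * (n.choose i)) • (Polynomial.derivative (A i) * Polynomial.X ^ (n - i))
          + ((-1 : ℚ) ^ i * (n.choose i) * (n - i : ℕ)) • (A i * Polynomial.X ^ (n - i - 1)) := by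
      intro i hi
      rw [Polynomial.derivative_smul, Polynomial.derivative_mul, Polynomial.derivative_X_pow,
        smul_add]
      congr 1
      simp only [Polynomial.smul_eq_C_mul, map_mul, map_pow, map_neg, map_one,
        Polynomial.C_eq_natCast]
      ring
    rw [Finset.sum_congr rfl hterm, Finset.sum_add_distrib]
    rw [Finset.sum_range_succ' (fun i => ((-1 : ℚ) ^ i * (n.choose i)) • (Polynomial.derivative (A i) * Polynomial.X ^ (n - i)))]
    rw [Finset.sum_range_succ (fun i => ((-1 : ℚ) ^ i * (n.choose i) * (n - i : ℕ)) • (A i * Polynomial.X ^ (n - i - 1)))]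
    simp only [hA0, hA, Nat.sub_self, Nat.cast_zero, mul_zero, zero_smul, zero_mul, mul_zero,
      add_zero, smul_zero, zero_add]
    rw [← Finset.sum_add_distrib]
    apply Finset.sum_eq_zero
    intro i hi
    have hi' : i < n := Finset.mem_range.mp hi
    have hch : (n.choose (i + 1)) * (i + 1) = n.choose i * (n - i) := Nat.choose_succ_right_eq n i
    have hm : n - (i+1) = n - i - 1 := by omega
    rw [hm, ← Nat.cast_smul_eq_nsmul ℚ (i+1) (A i), smul_mul_assoc, smul_smul]
    rw [← add_smul]
    have h0 : (-1 : ℚ) ^ (i + 1) * (n.choose (i+1)) * ((i:ℕ)+1 : ℚ)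
        + (-1 : ℚ) ^ i * (n.choose i) * ((n - i : ℕ) : ℚ) = 0 := by
      have := congrArg (fun m : ℕ => (m : ℚ)) hch
      push_cast at this
      rw [pow_succ]
      linear_combination ((-1 : ℚ) ^ i * (-1)) * this
    push_cast at h0 ⊢
    rw [h0, zero_smul]
  have hC : S = Polynomial.C (S.coeff 0) := Polynomial.eq_C_of_derivative_eq_zero hder
  have hcoeff : S.coeff 0 = (-1 : ℚ) ^ n * (A n).eval 0 := by
    rw [Polynomial.coeff_zero_eq_eval_zero, hS, Polynomial.eval_finset_sum,
      Finset.sum_range_succ]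
    simp only [Polynomial.eval_smul, Polynomial.eval_mul, Polynomial.eval_pow,
      Polynomial.eval_X, smul_eq_mul, Nat.sub_self, pow_zero, mul_one, Nat.choose_self,
      Nat.cast_one]
    rw [Finset.sum_eq_zero]
    · ring
    intro i hi
    rw [zero_pow (Nat.sub_ne_zero_of_lt (Finset.mem_range.mp hi))]
    ring
  have h1 : S = Polynomial.C ((-1 : ℚ) ^ n * (A n).eval 0) := by rw [hC, hcoeff]
  refine ⟨h1, ?_⟩
  have h2 := h1
  rw [hS, Finset.sum_range_succ] at h2
  set T := ∑ i ∈ Finset.range n, ((-1 : ℚ) ^ i * (n.choose i)) •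
      (A i * Polynomial.X ^ (n - i)) with hT
  simp only [Nat.sub_self, pow_zero, mul_one, Nat.choose_self, Nat.cast_one] at h2
  have hsum : (∑ i ∈ Finset.range n, ((-1 : ℚ) ^ (n + i + 1) * (n.choose i)) •
      (A i * Polynomial.X ^ (n - i))) = (-(-1 : ℚ) ^ n) • T := by
    rw [hT, Finset.smul_sum]
    apply Finset.sum_congr rfl
    intro i hi
    rw [smul_smul]
    congr 1
    rw [pow_add, pow_succ]
    ring
  rw [hsum]
  have hTeq : T = Polynomial.C ((-1 : ℚ) ^ n * (A n).eval 0) - (-1 : ℚ) ^ n • A n :=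
    eq_sub_of_add_eq h2
  have hne : (-(-1 : ℚ) ^ n * (-1 : ℚ) ^ n) = -1 := by
    rw [neg_mul, ← pow_add, ← two_mul, pow_mul]
    norm_num
  rw [hTeq, smul_sub, smul_smul, hne, Polynomial.smul_C, smul_eq_mul, ← mul_assoc, hne]
  simp [neg_one_mul, map_neg]
end
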